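/- Let P : ℝ² → Matrix (Fin N) (Fin N) ℂ be a continuously differentiable rank-one Hermitian projector (P² = P, Pᴴ = P, tr P = 1 everywhere), and suppose at a given point t := trace(∂₊P·P·∂₋P) ≠ 0. Then Π₊P := (∂₊P·P·∂₋P)/t satisfies at that point: (Π₊P)² = Π₊P, (Π₊P)ᴴ = Π₊P, trace(Π₊P) = 1, and P·(Π₊P) = (Π₊P)·P = 0. That is, the raising operator produces a rank-one Hermitian projector orthogonal to P. -/

import Mathlib

open Matrix

noncomputable section

attribute [local instance] Matrix.normedAddCommGroup Matrix.normedSpace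

/-- The Wirtinger derivative `∂₊ = ½(∂/∂x − i ∂/∂y)` of a matrix-valued map on `ℝ²`. -/
def dp {N : ℕ} (P : ℝ × ℝ → Matrix (Fin N) (Fin N) ℂ) (p : ℝ × ℝ) :
    Matrix (Fin N) (Fin N) ℂ :=
  (2 : ℂ)⁻¹ • (fderiv ℝ P p (1, 0) - Complex.I • fderiv ℝ P p (0, 1))

/-- The Wirtinger derivative `∂₋ = ½(∂/∂x + i ∂/∂y)` of a matrix-valued map on `ℝ²`. -/
def dm {N : ℕ} (P : ℝ × ℝ → Matrix (Fin N) (Fin N) ℂ) (p : ℝ × ℝ) :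
    Matrix (Fin N) (Fin N) ℂ :=
  (2 : ℂ)⁻¹ • (fderiv ℝ P p (1, 0) + Complex.I • fderiv ℝ P p (0, 1))

/-- A rank-one Hermitian projector `Q` (idempotent, Hermitian, trace one) satisfies
`Q X Q = tr(Q X) • Q` for every `X`. -/
lemma key_rank_one {N : ℕ} (Q : Matrix (Fin N) (Fin N) ℂ) (hH : Qᴴ = Q) (hI : Q * Q = Q)
    (htr : Q.trace = 1) (X : Matrix (Fin N) (Fin N) ℂ) :
    Q * X * Q = (Q * X).trace • Q := by
  classical
  have hherm : Q.IsHermitian := hH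
  set U : Matrix (Fin N) (Fin N) ℂ := (hherm.eigenvectorUnitary : Matrix (Fin N) (Fin N) ℂ)
    with hU
  set e : Fin N → ℝ := hherm.eigenvalues with he
  set d : Fin N → ℂ := fun i => (e i : ℂ) with hdd
  have hUU : star U * U = 1 := Unitary.coe_star_mul_self hherm.eigenvectorUnitary
  have hUU' : U * star U = 1 := Unitary.coe_mul_star_self hherm.eigenvectorUnitary
  have cancel : ∀ Z : Matrix (Fin N) (Fin N) ℂ, star U * (U * Z) = Z := by
    intro Z; rw [← Matrix.mul_assoc, hUU, Matrix.one_mul]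
  have cancel' : ∀ Z : Matrix (Fin N) (Fin N) ℂ, U * (star U * Z) = Z := by
    intro Z; rw [← Matrix.mul_assoc, hUU', Matrix.one_mul]
  have spec : Q = U * diagonal d * star U := hherm.spectral_theorem
  -- the diagonal is idempotent
  have hdiag : diagonal d * diagonal d = diagonal d := by
    have h2 : U * diagonal d * star U * (U * diagonal d * star U) = U * diagonal d * star U := by
      rw [← spec]; exact hI
    have h3 := congrArg (fun Z => star U * Z * U) h2
    simpa only [Matrix.mul_assoc, cancel, cancel', hUU, Matrix.mul_one, Matrix.one_mul] using h3
  have hd01 : ∀ i, e i = 0 ∨ e i = 1 := by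
    intro i
    have h4 : d i * d i = d i := by
      have h5 : diagonal (fun i => d i * d i) = diagonal d := by
        rw [← diagonal_mul_diagonal, hdiag]
      have h6 := congrArg (fun (M : Matrix (Fin N) (Fin N) ℂ) => M i i) h5
      simpa using h6
    have h7 : (e i : ℂ) * (e i : ℂ) = (e i : ℂ) := h4
    have h8 : e i * e i = e i := by exact_mod_cast h7
    have h9 : e i * (e i - 1) = 0 := by ring_nf; linarith
    rcases mul_eq_zero.mp h9 with h | h
    · exact Or.inl h
    · right; linarith
  -- trace of Q is the sum of eigenvalues
  have hsum : ∑ i, e i = 1 := by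
    have h9 : ∑ i, d i = 1 := by
      rw [← htr, spec, Matrix.trace_mul_cycle, hUU, Matrix.one_mul, Matrix.trace_diagonal]
    rw [hdd] at h9
    simp only at h9
    exact_mod_cast h9
  -- find the unique index with eigenvalue 1
  have hex : ∃ k, e k = 1 := by
    by_contra hc
    push_neg at hc
    have : ∀ i, e i = 0 := fun i => (hd01 i).resolve_right (hc i)
    rw [Finset.sum_congr rfl (fun i _ => this i)] at hsum
    simp at hsum
  obtain ⟨k, hk⟩ := hex
  have hzero : ∀ j, j ≠ k → e j = 0 := by
    intro j hj
    have hsplit : ∑ i ∈ Finset.univ.erase k, e i = 0 := by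
      have := Finset.add_sum_erase Finset.univ e (Finset.mem_univ k)
      rw [hsum, hk] at this
      linarith
    have hnn : ∀ i ∈ Finset.univ.erase k, 0 ≤ e i := by
      intro i _
      rcases hd01 i with h | h <;> simp [h]
    have := (Finset.sum_eq_zero_iff_of_nonneg hnn).mp hsplit j
      (Finset.mem_erase.mpr ⟨hj, Finset.mem_univ j⟩)
    exact this
  have hdval : d = fun i => if i = k then 1 else 0 := by
    funext i
    by_cases h : i = k
    · subst h; simp [hdd, hk]
    · simp [hdd, h, hzero i h]
  -- sandwich computation
  set Y : Matrix (Fin N) (Fin N) ℂ := star U * X * U with hY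
  have claim1 : diagonal d * Y * diagonal d = (Y k k) • diagonal d := by
    ext i j
    rw [Matrix.smul_apply, Matrix.mul_diagonal, Matrix.diagonal_mul, Matrix.diagonal_apply, hdval]
    by_cases hik : i = k
    · by_cases hjk : j = k
      · subst hik; subst hjk; simp
      · have hij : i ≠ j := by rw [hik]; exact Ne.symm hjk
        simp [hjk, hij]
    · simp [hik]
  have claim2 : (Q * X).trace = Y k k := by
    rw [spec]
    have h10 : U * diagonal d * star U * X = U * (diagonal d * (star U * X)) := by
      simp only [Matrix.mul_assoc]
    rw [h10, Matrix.trace_mul_comm]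
    have h11 : diagonal d * (star U * X) * U = diagonal d * Y := by
      rw [hY]; simp only [Matrix.mul_assoc]
    rw [h11, hdval]
    simp [Matrix.trace, Matrix.diag, Matrix.diagonal_mul, ite_mul, Finset.sum_ite_eq]
  calc Q * X * Q = U * (diagonal d * Y * diagonal d) * star U := by
        rw [spec, hY]; simp only [Matrix.mul_assoc]
    _ = U * ((Y k k) • diagonal d) * star U := by rw [claim1]
    _ = (Y k k) • (U * diagonal d * star U) := by
        rw [mul_smul_comm, smul_mul_assoc]
    _ = (Q * X).trace • Q := by rw [claim2, ← spec]

section Aux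

variable (N : ℕ)

/-- Matrix multiplication as an `ℝ`-bilinear continuous map. -/
def mulCLM : Matrix (Fin N) (Fin N) ℂ →L[ℝ]
    Matrix (Fin N) (Fin N) ℂ →L[ℝ] Matrix (Fin N) (Fin N) ℂ :=
  LinearMap.toContinuousLinearMap
  { toFun := fun A => LinearMap.toContinuousLinearMap
      { toFun := fun B => A * B
        map_add' := fun B C => mul_add A B C
        map_smul' := fun r B => mul_smul_comm r A B }
    map_add' := fun A B => by
      refine ContinuousLinearMap.ext fun C => ?_
      simp only [ContinuousLinearMap.add_apply]
      exact add_mul A B C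
    map_smul' := fun r A => by
      refine ContinuousLinearMap.ext fun C => ?_
      simp only [ContinuousLinearMap.smul_apply, RingHom.id_apply]
      exact smul_mul_assoc r A C }

/-- Conjugate transpose as an `ℝ`-linear continuous map. -/
def ctCLM : Matrix (Fin N) (Fin N) ℂ →L[ℝ] Matrix (Fin N) (Fin N) ℂ :=
  LinearMap.toContinuousLinearMap
  { toFun := fun A => Aᴴ
    map_add' := fun A B => conjTranspose_add A B
    map_smul' := fun r A => by
      simp [Matrix.conjTranspose_smul] }

end Aux

/-- For a `C¹` rank-one Hermitian projector `P` and a point where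
`t = trace(∂₊P·P·∂₋P) ≠ 0`, the raising operator `Π₊P = (∂₊P·P·∂₋P)/t` is a rank-one
Hermitian projector orthogonal to `P`. -/
theorem raising_operator_projector {N : ℕ} (P : ℝ × ℝ → Matrix (Fin N) (Fin N) ℂ)
    (hP : ContDiff ℝ 1 P)
    (hproj : ∀ p, P p * P p = P p)
    (hherm : ∀ p, (P p)ᴴ = P p)
    (htr : ∀ p, (P p).trace = 1)
    (p : ℝ × ℝ)
    (t : ℂ) (ht : t = (dp P p * P p * dm P p).trace) (ht0 : t ≠ 0)
    (PiP : Matrix (Fin N) (Fin N) ℂ) (hPiP : PiP = t⁻¹ • (dp P p * P p * dm P p)) :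
    PiP * PiP = PiP ∧ PiPᴴ = PiP ∧ PiP.trace = 1 ∧ P p * PiP = 0 ∧ PiP * P p = 0 := by
  classical
  have hd : DifferentiableAt ℝ P p := (hP.differentiable one_ne_zero).differentiableAt
  have hDP : HasFDerivAt P (fderiv ℝ P p) p := hd.hasFDerivAt
  set D := fderiv ℝ P p with hDdef
  set Q := P p with hQ
  -- Leibniz rule for the derivative of P * P = P
  have hbb : IsBoundedBilinearMap ℝ
      (fun q : Matrix (Fin N) (Fin N) ℂ × Matrix (Fin N) (Fin N) ℂ => mulCLM N q.1 q.2) :=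
    (mulCLM N).isBoundedBilinearMap
  have hprodD : HasFDerivAt (fun x => (P x, P x)) (D.prod D) p := hDP.prodMk hDP
  have hcomp := (hbb.hasFDerivAt (Q, Q)).comp p hprodD
  have heq2 : (fun q : Matrix (Fin N) (Fin N) ℂ × Matrix (Fin N) (Fin N) ℂ => mulCLM N q.1 q.2)
      ∘ (fun x => (P x, P x)) = P := by
    funext x
    show P x * P x = P x
    exact hproj x
  rw [heq2] at hcomp
  have hDeq := hcomp.unique hDP
  have leib : ∀ v : ℝ × ℝ, D v = Q * D v + D v * Q := by
    intro v
    have h1 := ContinuousLinearMap.ext_iff.mp hDeq v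
    replace h1 : hbb.deriv (Q, Q) ((D.prod D) v) = D v := h1
    rw [ContinuousLinearMap.prod_apply] at h1
    rw [hbb.deriv_apply] at h1
    exact h1.symm
  -- Hermitian derivative
  have hcomp2 := ((ctCLM N).hasFDerivAt (x := Q)).comp p hDP
  have heq3 : ⇑(ctCLM N) ∘ P = P := by
    funext x
    show (P x)ᴴ = P x
    exact hherm x
  rw [heq3] at hcomp2
  have hDherm : ∀ v : ℝ × ℝ, (D v)ᴴ = D v := by
    intro v
    have h1 := ContinuousLinearMap.ext_iff.mp (hcomp2.unique hDP) v
    replace h1 : ctCLM N (D v) = D v := h1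
    exact h1
  -- sandwiched derivatives vanish
  have hQQ : Q * Q = Q := hproj p
  have hQH : Qᴴ = Q := hherm p
  have hsand : ∀ X : Matrix (Fin N) (Fin N) ℂ, X = Q * X + X * Q → Q * X * Q = 0 := by
    intro X h
    have h2 : Q * X = Q * X + Q * X * Q := by
      conv_lhs => rw [h]
      rw [mul_add, ← Matrix.mul_assoc, hQQ, Matrix.mul_assoc]
    exact (left_eq_add.mp h2)
  set Dx := D (1, 0) with hDx
  set Dy := D (0, 1) with hDy
  have hQxQ : Q * Dx * Q = 0 := hsand Dx (leib (1, 0))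
  have hQyQ : Q * Dy * Q = 0 := hsand Dy (leib (0, 1))
  have hA : dp P p = (2 : ℂ)⁻¹ • (Dx - Complex.I • Dy) := rfl
  have hB : dm P p = (2 : ℂ)⁻¹ • (Dx + Complex.I • Dy) := rfl
  set A := dp P p with hAd
  set B := dm P p with hBd
  have hQAQ : Q * A * Q = 0 := by
    rw [hA]
    simp only [mul_smul_comm, smul_mul_assoc, mul_sub, sub_mul, hQxQ, hQyQ, smul_zero, sub_zero]
  have hQBQ : Q * B * Q = 0 := by
    rw [hB]
    simp only [mul_smul_comm, smul_mul_assoc, mul_add, add_mul, hQxQ, hQyQ, smul_zero, add_zero]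
  have hAH : Aᴴ = B := by
    rw [hA, hB]
    rw [Matrix.conjTranspose_smul, Matrix.conjTranspose_sub, Matrix.conjTranspose_smul,
      hDherm, hDherm]
    simp [Complex.conj_I, sub_neg_eq_add, hDx, hDy]
  have hBH : Bᴴ = A := by rw [← hAH, conjTranspose_conjTranspose]
  -- main algebra
  have hMH : (A * Q * B)ᴴ = A * Q * B := by
    rw [Matrix.conjTranspose_mul, Matrix.conjTranspose_mul, hBH, hAH, hQH]
    simp only [Matrix.mul_assoc]
  have hstart : star t = t := by
    rw [ht, ← Matrix.trace_conjTranspose, hMH]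
  have hQM : Q * (A * Q * B) = 0 := by
    have h1 : Q * (A * Q * B) = (Q * A * Q) * B := by simp only [Matrix.mul_assoc]
    rw [h1, hQAQ, Matrix.zero_mul]
  have hMQ : (A * Q * B) * Q = 0 := by
    have h1 : (A * Q * B) * Q = A * (Q * B * Q) := by simp only [Matrix.mul_assoc]
    rw [h1, hQBQ, Matrix.mul_zero]
  have hMM : (A * Q * B) * (A * Q * B) = t • (A * Q * B) := by
    have h1 : (A * Q * B) * (A * Q * B) = A * (Q * (B * A) * Q) * B := by
      simp only [Matrix.mul_assoc]
    rw [h1, key_rank_one Q hQH hQQ (htr p) (B * A)]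
    rw [mul_smul_comm, smul_mul_assoc]
    congr 1
    rw [ht, Matrix.trace_mul_comm Q (B * A), Matrix.trace_mul_comm (A * Q) B]
    simp only [Matrix.mul_assoc]
  refine ⟨?_, ?_, ?_, ?_, ?_⟩
  · rw [hPiP, smul_mul_assoc, mul_smul_comm, hMM, smul_smul, smul_smul]
    congr 1
    field_simp
  · rw [hPiP, Matrix.conjTranspose_smul, hMH, star_inv₀, hstart]
  · rw [hPiP, Matrix.trace_smul, ht, smul_eq_mul, inv_mul_cancel₀]
    rw [← ht]; exact ht0
  · rw [hPiP, mul_smul_comm, hQM, smul_zero]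
  · rw [hPiP, smul_mul_assoc, hMQ, smul_zero]
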